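/- arXiv:1104.0136 — 2 statements merged into one kernel-verified Lean document; each statement's English description precedes it below -/
import Mathlib

section
/- Let Δ ≥ 1 and n_M be natural numbers, let l = n_M div Δ and Q = n_M mod Δ, and suppose l is odd. Then for every integer x with 0 ≤ x ≤ n_M: ρ(x) = n_M − 2x if 0 ≤ x ≤ Q + Δ(l−1)/2; ρ(x) = Δ(l+1)/2 − x if Q + Δ(l−1)/2 ≤ x ≤ Δ(l+1)/2; and ρ(x) = 0 if Δ(l+1)/2 ≤ x ≤ n_M. -/
/-- Down-shift operator `S^Δ` on matrices over `F₂`: shifts rows down by `Δ`,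
filling the top `Δ` rows with zeros. -/
def shiftS (Δ : ℕ) {r c : ℕ} (X : Matrix (Fin r) (Fin c) (ZMod 2)) :
    Matrix (Fin r) (Fin c) (ZMod 2) :=
  fun i j => if _h : Δ ≤ (i : ℕ) then
      X ⟨(i : ℕ) - Δ, lt_of_le_of_lt (Nat.sub_le _ _) i.isLt⟩ j
    else 0

/-- The function `φ(p,q)`: with `l = p div q` (convention `p div 0 = 0`),
`φ(p,q) = q + l·q/2` for `l` even, `φ(p,q) = p − (l−1)·q/2` for `l` odd. -/
def phi (p q : ℕ) : ℕ :=
  if Even (p / q) then q + (p / q / 2) * q else p - ((p / q - 1) / 2) * q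

/-- Probability that the random variable `f` takes the value `a`, for the
discrete probability mass function `p`. -/
noncomputable def prEq {Ω α : Type*} [Fintype Ω] [DecidableEq α]
    (p : Ω → ℝ) (f : Ω → α) (a : α) : ℝ :=
  ∑ ω ∈ Finset.univ.filter (fun ω => f ω = a), p ω

/-- Shannon entropy (base 2) of the random variable `f` under the pmf `p`. -/
noncomputable def entropy2 {Ω α : Type*} [Fintype Ω] [Fintype α] [DecidableEq α]
    (p : Ω → ℝ) (f : Ω → α) : ℝ :=
  -∑ a : α, prEq p f a * Real.logb 2 (prEq p f a)

/-- Independence of two random variables under the pmf `p`. -/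
def IndepRV {Ω α β : Type*} [Fintype Ω] [DecidableEq α] [DecidableEq β]
    (p : Ω → ℝ) (f : Ω → α) (g : Ω → β) : Prop :=
  ∀ a b, prEq p (fun ω => (f ω, g ω)) (a, b) = prEq p f a * prEq p g b

/-- Mutual independence of three random variables under the pmf `p`. -/
def MutIndep3 {Ω α β γ : Type*} [Fintype Ω] [DecidableEq α] [DecidableEq β]
    [DecidableEq γ] (p : Ω → ℝ) (f : Ω → α) (g : Ω → β) (h : Ω → γ) : Prop :=
  ∀ a b c, prEq p (fun ω => (f ω, g ω, h ω)) (a, b, c)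
      = prEq p f a * prEq p g b * prEq p h c

/-- Mutual information (base 2) `I(f; g) = H(f) + H(g) − H(f, g)`. -/
noncomputable def mutInfo2 {Ω α β : Type*} [Fintype Ω] [Fintype α] [Fintype β]
    [DecidableEq α] [DecidableEq β] (p : Ω → ℝ) (f : Ω → α) (g : Ω → β) : ℝ :=
  entropy2 p f + entropy2 p g - entropy2 p (fun ω => (f ω, g ω))

/-- Number of ones in a vector over `F₂`. -/
def wt {n : ℕ} (a : Fin n → ZMod 2) : ℕ :=
  (Finset.univ.filter (fun i => a i = 1)).card

/-- `γ1(a)`: complement of `a` stacked over the all-ones vector of length `Δ`. -/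
def gamma1 (Δ : ℕ) {nM : ℕ} (a : Fin nM → ZMod 2) : Fin (nM + Δ) → ZMod 2 :=
  fun i => if h : (i : ℕ) < nM then 1 - a ⟨(i : ℕ), h⟩ else 1

/-- `γ2(a)`: the zero vector of length `Δ` stacked over the complement of `a`. -/
def gamma2 (Δ : ℕ) {nM : ℕ} (a : Fin nM → ZMod 2) : Fin (nM + Δ) → ZMod 2 :=
  fun i => if _h : Δ ≤ (i : ℕ) then
      1 - a ⟨(i : ℕ) - Δ, by have := i.isLt; omega⟩
    else 0

/-- The overlap `γ1(a)^T γ2(a)`: number of positions where both are one. -/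
def overlap (Δ : ℕ) {nM : ℕ} (a : Fin nM → ZMod 2) : ℕ :=
  (Finset.univ.filter (fun i => gamma1 Δ a i = 1 ∧ gamma2 Δ a i = 1)).card

/-- `ρ(x)`: minimal overlap over all vectors `a ∈ F₂^{n_M}` with `|a| = x`. -/
noncomputable def rho (Δ nM x : ℕ) : ℕ :=
  sInf (overlap Δ '' {a : Fin nM → ZMod 2 | wt a = x})

open Finset

namespace RhoAux


lemma zmod2_cases (z : ZMod 2) : z = 0 ∨ z = 1 := by revert z; decide

/-- weight in ℕ world -/
def wtN (nM : ℕ) (b : ℕ → ZMod 2) : ℕ :=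
  ((range nM).filter (fun j => b j = 1)).card

/-- overlap in ℕ world -/
def ovN (Δ nM : ℕ) (b : ℕ → ZMod 2) : ℕ :=
  ((range nM).filter (fun j => b j = 0 ∧ (j + Δ < nM → b (j + Δ) = 0))).card

/-- bad zeros in ℕ world -/
def BsetN (Δ nM : ℕ) (b : ℕ → ZMod 2) : Finset ℕ :=
  (range nM).filter (fun j => b j = 0 ∧ j + Δ < nM ∧ b (j + Δ) = 1)

lemma key_sum (Δ nM : ℕ) (b : ℕ → ZMod 2) :
    ovN Δ nM b + (BsetN Δ nM b).card + wtN nM b = nM := by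
  classical
  have h1 : ovN Δ nM b + (BsetN Δ nM b).card
      = (((range nM).filter (fun j => b j = 0))).card := by
    rw [ovN, BsetN]
    have e1 : (range nM).filter (fun j => b j = 0 ∧ (j + Δ < nM → b (j + Δ) = 0))
        = ((range nM).filter (fun j => b j = 0)).filter
            (fun j => ¬ (j + Δ < nM ∧ b (j + Δ) = 1)) := by
      rw [Finset.filter_filter]
      apply Finset.filter_congr
      intro j _
      rcases zmod2_cases (b (j + Δ)) with h | h <;> simp [h]
    have e2 : (range nM).filter (fun j => b j = 0 ∧ j + Δ < nM ∧ b (j + Δ) = 1)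
        = ((range nM).filter (fun j => b j = 0)).filter
            (fun j => (j + Δ < nM ∧ b (j + Δ) = 1)) := by
      rw [Finset.filter_filter]
    rw [e1, e2, add_comm]
    exact Finset.card_filter_add_card_filter_not _
  rw [h1, wtN]
  have e3 : (range nM).filter (fun j => b j = 1)
      = (range nM).filter (fun j => ¬ b j = 0) := by
    apply Finset.filter_congr
    intro j _
    rcases zmod2_cases (b j) with h | h <;> simp [h]
  rw [e3, Finset.card_filter_add_card_filter_not, Finset.card_range]

lemma BsetN_card_le_wtN (Δ nM : ℕ) (hΔ : 0 < Δ) (b : ℕ → ZMod 2) :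
    (BsetN Δ nM b).card ≤ wtN nM b := by
  apply Finset.card_le_card_of_injOn (fun j => j + Δ)
  · intro j hj
    simp only [Finset.mem_coe, BsetN, Finset.mem_filter, Finset.mem_range] at hj
    simp only [Finset.mem_coe, wtN, Finset.mem_filter, Finset.mem_range]
    exact ⟨hj.2.2.1, hj.2.2.2⟩
  · intro x _ y _ h
    exact add_right_cancel h

/-- the key height iff -/
lemma height_iff (Δ nM r h : ℕ) (hΔ : 0 < Δ) (hr : r < Δ) :
    r + Δ * h < nM ↔ h < nM / Δ + (if r < nM % Δ then 1 else 0) := by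
  have hd := Nat.div_add_mod nM Δ
  have hq : nM % Δ < Δ := Nat.mod_lt _ hΔ
  set l := nM / Δ with hl
  set Q := nM % Δ with hQ
  constructor
  · intro hlt
    by_contra hge
    push_neg at hge
    have h1 : l + (if r < Q then 1 else 0) ≤ h := hge
    have h2 : Δ * (l + (if r < Q then 1 else 0)) ≤ Δ * h := Nat.mul_le_mul_left _ h1
    by_cases hrQ : r < Q
    · simp only [hrQ, if_true] at h2
      have : Δ * (l + 1) = Δ * l + Δ := by ring
      omega
    · simp only [hrQ, if_false] at h2
      have : Δ * (l + 0) = Δ * l := by ring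
      omega
  · intro hlt
    by_cases hrQ : r < Q
    · simp only [hrQ, if_true] at hlt
      rcases Nat.lt_succ_iff_lt_or_eq.mp hlt with h1 | h1
      · have h2 : Δ * (h + 1) ≤ Δ * l := Nat.mul_le_mul_left _ h1
        have : Δ * (h + 1) = Δ * h + Δ := by ring
        omega
      · subst h1; omega
    · simp only [hrQ, if_false] at hlt
      have h2 : Δ * (h + 1) ≤ Δ * l := Nat.mul_le_mul_left _ hlt
      have : Δ * (h + 1) = Δ * h + Δ := by ring
      omega

/-- fiber cardinality -/
lemma fiber_card (Δ nM r : ℕ) (hΔ : 0 < Δ) (hr : r < Δ) :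
    ((range nM).filter (fun j => j % Δ = r)).card
      = nM / Δ + (if r < nM % Δ then 1 else 0) := by
  rw [← Finset.card_range (nM / Δ + (if r < nM % Δ then 1 else 0))]
  apply Finset.card_bij' (fun j _ => j / Δ) (fun h _ => r + Δ * h)
  · intro j hj
    simp only [Finset.mem_filter, Finset.mem_range] at hj
    rw [Finset.mem_range, ← height_iff Δ nM r (j / Δ) hΔ hr]
    have := Nat.div_add_mod j Δ
    omega
  · intro h hh
    rw [Finset.mem_range] at hh
    rw [Finset.mem_filter, Finset.mem_range, height_iff Δ nM r h hΔ hr]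
    refine ⟨hh, ?_⟩
    rw [Nat.add_mul_mod_self_left, Nat.mod_eq_of_lt hr]
  · intro j hj
    simp only [Finset.mem_filter, Finset.mem_range] at hj
    have := Nat.div_add_mod j Δ
    omega
  · intro h _
    rw [Nat.add_mul_div_left _ _ hΔ, Nat.div_eq_of_lt hr, zero_add]

lemma sum_ite_lt (Δ Q k : ℕ) (hQ : Q ≤ Δ) :
    ∑ r ∈ range Δ, (k + (if r < Q then 1 else 0)) = Δ * k + Q := by
  rw [Finset.sum_add_distrib, Finset.sum_const, Finset.card_range, smul_eq_mul]
  congr 1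
  rw [← Finset.card_filter]
  rw [show (range Δ).filter (fun x => x < Q) = range Q by
    ext r; simp only [Finset.mem_filter, Finset.mem_range]; omega]
  exact Finset.card_range Q

lemma BsetN_fiber (Δ nM r : ℕ) (hΔ : 0 < Δ) (b : ℕ → ZMod 2) :
    2 * ((BsetN Δ nM b).filter (fun j => j % Δ = r)).card
      ≤ ((range nM).filter (fun j => j % Δ = r)).card := by
  classical
  set F := (BsetN Δ nM b).filter (fun j => j % Δ = r) with hF
  set G := F.image (fun j => j + Δ) with hG
  have hcardG : G.card = F.card := by
    rw [hG]
    apply Finset.card_image_of_injOn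
    intro x _ y _ h
    exact add_right_cancel h
  have hdisj : Disjoint F G := by
    rw [Finset.disjoint_right]
    intro j hjG hjF
    rw [hG, Finset.mem_image] at hjG
    obtain ⟨j', hj', rfl⟩ := hjG
    simp only [hF, BsetN, Finset.mem_filter, Finset.mem_range] at hj' hjF
    rw [hj'.1.2.2.2] at hjF
    exact one_ne_zero hjF.1.2.1
  have hsub : F ∪ G ⊆ (range nM).filter (fun j => j % Δ = r) := by
    intro j hj
    rcases Finset.mem_union.mp hj with h | h
    · simp only [hF, BsetN, Finset.mem_filter, Finset.mem_range] at h
      simp only [Finset.mem_filter, Finset.mem_range]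
      exact ⟨h.1.1, h.2⟩
    · rw [hG, Finset.mem_image] at h
      obtain ⟨j', hj', rfl⟩ := h
      simp only [hF, BsetN, Finset.mem_filter, Finset.mem_range] at hj'
      simp only [Finset.mem_filter, Finset.mem_range]
      exact ⟨hj'.1.2.2.1, by rw [Nat.add_mod_right]; exact hj'.2⟩
  have := Finset.card_le_card hsub
  rw [Finset.card_union_of_disjoint hdisj, hcardG] at this
  omega

lemma BsetN_card_le (Δ nM k Q : ℕ) (hΔ : 0 < Δ) (hQ : Q < Δ)
    (hnM : nM = Δ * (2 * k + 1) + Q) (b : ℕ → ZMod 2) :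
    (BsetN Δ nM b).card ≤ Δ * k + Q := by
  classical
  have hl : nM / Δ = 2 * k + 1 := by
    rw [hnM, Nat.mul_add_div hΔ, Nat.div_eq_of_lt hQ, add_zero]
  have hQ' : nM % Δ = Q := by
    rw [hnM, Nat.mul_add_mod, Nat.mod_eq_of_lt hQ]
  have hfib : (BsetN Δ nM b).card
      = ∑ r ∈ range Δ, ((BsetN Δ nM b).filter (fun j => j % Δ = r)).card := by
    apply Finset.card_eq_sum_card_fiberwise
    intro j _
    rw [Finset.mem_coe, Finset.mem_range]
    exact Nat.mod_lt _ hΔ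
  rw [hfib, ← sum_ite_lt Δ Q k (le_of_lt hQ)]
  apply Finset.sum_le_sum
  intro r hr
  rw [Finset.mem_range] at hr
  have h1 := BsetN_fiber Δ nM r hΔ b
  rw [fiber_card Δ nM r hΔ hr, hl, hQ'] at h1
  by_cases hrQ : r < Q <;> simp only [hrQ, if_true, if_false] at * <;> omega

/-- odd-height positions -/
def ON (Δ nM : ℕ) : Finset ℕ := (range nM).filter (fun j => (j / Δ) % 2 = 1)

/-- last even height in short chains -/
def DN (Δ nM k : ℕ) : Finset ℕ :=
  (range nM).filter (fun j => nM % Δ ≤ j % Δ ∧ j / Δ = 2 * k)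

lemma ON_card (Δ nM k Q : ℕ) (hΔ : 0 < Δ) (hQ : Q < Δ)
    (hnM : nM = Δ * (2 * k + 1) + Q) :
    (ON Δ nM).card = Δ * k + Q := by
  classical
  have hl : nM / Δ = 2 * k + 1 := by
    rw [hnM, Nat.mul_add_div hΔ, Nat.div_eq_of_lt hQ, add_zero]
  have hQ' : nM % Δ = Q := by
    rw [hnM, Nat.mul_add_mod, Nat.mod_eq_of_lt hQ]
  have hfib : (ON Δ nM).card
      = ∑ r ∈ range Δ, ((ON Δ nM).filter (fun j => j % Δ = r)).card := by
    apply Finset.card_eq_sum_card_fiberwise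
    intro j _
    rw [Finset.mem_coe, Finset.mem_range]
    exact Nat.mod_lt _ hΔ
  rw [hfib, ← sum_ite_lt Δ Q k (le_of_lt hQ)]
  apply Finset.sum_congr rfl
  intro r hr
  rw [Finset.mem_range] at hr
  rw [← Finset.card_range (k + if r < Q then 1 else 0)]
  apply Finset.card_bij' (fun j _ => j / Δ / 2) (fun u _ => r + Δ * (2 * u + 1))
  · intro j hj
    simp only [ON, Finset.mem_filter, Finset.mem_range] at hj
    obtain ⟨⟨hjn, hodd⟩, hmod⟩ := hj
    have hiff := (height_iff Δ nM r (j / Δ) hΔ hr).mp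
      (by have := Nat.div_add_mod j Δ; omega)
    rw [hl, hQ'] at hiff
    rw [Finset.mem_range]
    by_cases hrQ : r < Q <;> simp only [hrQ, if_true, if_false] at * <;> omega
  · intro u hu
    rw [Finset.mem_range] at hu
    have hlt : r + Δ * (2 * u + 1) < nM := by
      rw [height_iff Δ nM r (2 * u + 1) hΔ hr, hl, hQ']
      by_cases hrQ : r < Q <;> simp only [hrQ, if_true, if_false] at * <;> omega
    simp only [ON, Finset.mem_filter, Finset.mem_range]
    refine ⟨⟨hlt, ?_⟩, ?_⟩
    · rw [Nat.add_mul_div_left _ _ hΔ, Nat.div_eq_of_lt hr, zero_add]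
      omega
    · rw [Nat.add_mul_mod_self_left, Nat.mod_eq_of_lt hr]
  · intro j hj
    simp only [ON, Finset.mem_filter, Finset.mem_range] at hj
    have h1 : 2 * (j / Δ / 2) + 1 = j / Δ := by omega
    rw [h1]
    have := Nat.div_add_mod j Δ
    omega
  · intro u _
    rw [Nat.add_mul_div_left _ _ hΔ, Nat.div_eq_of_lt hr, zero_add]
    omega

lemma DN_card (Δ nM k Q : ℕ) (hΔ : 0 < Δ) (hQ : Q < Δ)
    (hnM : nM = Δ * (2 * k + 1) + Q) :
    (DN Δ nM k).card = Δ - Q := by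
  classical
  have hl : nM / Δ = 2 * k + 1 := by
    rw [hnM, Nat.mul_add_div hΔ, Nat.div_eq_of_lt hQ, add_zero]
  have hQ' : nM % Δ = Q := by
    rw [hnM, Nat.mul_add_mod, Nat.mod_eq_of_lt hQ]
  rw [← Nat.card_Ico Q Δ]
  apply Finset.card_bij' (fun j _ => j % Δ) (fun r _ => r + Δ * (2 * k))
  · intro j hj
    simp only [DN, Finset.mem_filter, Finset.mem_range] at hj
    rw [Finset.mem_Ico]
    exact ⟨by rw [← hQ']; exact hj.2.1, Nat.mod_lt _ hΔ⟩
  · intro r hr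
    rw [Finset.mem_Ico] at hr
    have hlt : r + Δ * (2 * k) < nM := by
      rw [height_iff Δ nM r (2 * k) hΔ hr.2, hl, hQ']
      omega
    simp only [DN, Finset.mem_filter, Finset.mem_range]
    refine ⟨hlt, ?_, ?_⟩
    · rw [Nat.add_mul_mod_self_left, Nat.mod_eq_of_lt hr.2, hQ']
      exact hr.1
    · rw [Nat.add_mul_div_left _ _ hΔ, Nat.div_eq_of_lt hr.2, zero_add]
  · intro j hj
    simp only [DN, Finset.mem_filter, Finset.mem_range] at hj
    have h2 := hj.2.2
    have h3 := Nat.div_add_mod j Δ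
    rw [h2] at h3
    omega
  · intro r hr
    rw [Finset.mem_Ico] at hr
    rw [Nat.add_mul_mod_self_left, Nat.mod_eq_of_lt hr.2]

/-- indicator function -/
def indN (T : Finset ℕ) : ℕ → ZMod 2 := fun j => if j ∈ T then 1 else 0

lemma indN_support (T : Finset ℕ) (nM : ℕ) (hT : T ⊆ range nM) :
    ∀ n, nM ≤ n → indN T n = 0 := by
  intro n hn
  rw [indN, if_neg]
  intro hmem
  have := hT hmem
  rw [Finset.mem_range] at this
  omega

lemma wtN_indN (nM : ℕ) (T : Finset ℕ) (hT : T ⊆ range nM) :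
    wtN nM (indN T) = T.card := by
  rw [wtN]
  congr 1
  ext j
  simp only [Finset.mem_filter, Finset.mem_range]
  simp only [indN]
  constructor
  · rintro ⟨h1, h2⟩
    by_contra hmem
    rw [if_neg hmem] at h2
    exact zero_ne_one h2
  · intro hmem
    refine ⟨by have := hT hmem; rwa [Finset.mem_range] at this, by rw [if_pos hmem]⟩

lemma mem_ON_ge (Δ nM : ℕ) (hΔ : 0 < Δ) (j : ℕ) (hj : j ∈ ON Δ nM) : Δ ≤ j := by
  simp only [ON, Finset.mem_filter, Finset.mem_range] at hj
  have h1 : 1 ≤ j / Δ := by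
    have h2 := hj.2
    generalize j / Δ = t at h2 ⊢
    omega
  have := Nat.div_add_mod j Δ
  have h2 : Δ * 1 ≤ Δ * (j / Δ) := Nat.mul_le_mul_left _ h1
  omega

lemma pred_divmod (Δ j : ℕ) (hΔ : 0 < Δ) (h1 : 1 ≤ j / Δ) :
    (j - Δ) / Δ = j / Δ - 1 ∧ (j - Δ) % Δ = j % Δ := by
  obtain ⟨h', hh'⟩ : ∃ h', j / Δ = h' + 1 := ⟨j / Δ - 1, by omega⟩
  have hj : j = Δ * h' + Δ + j % Δ := by
    have := Nat.div_add_mod j Δ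
    rw [hh'] at this
    have e : Δ * (h' + 1) = Δ * h' + Δ := by ring
    omega
  have hsub : j - Δ = Δ * h' + j % Δ := by omega
  have hm : j % Δ < Δ := Nat.mod_lt _ hΔ
  constructor
  · rw [hsub, Nat.mul_add_div hΔ, Nat.div_eq_of_lt hm, add_zero, hh']
    omega
  · rw [hsub, Nat.mul_add_mod, Nat.mod_eq_of_lt hm]

lemma BsetN_ge (Δ nM : ℕ) (hΔ : 0 < Δ) (T S : Finset ℕ) (hT : T ⊆ range nM)
    (hST : S ⊆ T) (hSO : S ⊆ ON Δ nM) (hpred : ∀ j ∈ S, j - Δ ∉ T) :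
    S.card ≤ (BsetN Δ nM (indN T)).card := by
  apply Finset.card_le_card_of_injOn (fun j => j - Δ)
  · intro j hj
    have hge := mem_ON_ge Δ nM hΔ j (hSO hj)
    have hjn : j < nM := by
      have := hT (hST hj); rwa [Finset.mem_range] at this
    simp only [Finset.mem_coe, BsetN, Finset.mem_filter, Finset.mem_range]
    refine ⟨by omega, ?_, by omega, ?_⟩
    · rw [indN, if_neg (hpred j hj)]
    · rw [show j - Δ + Δ = j by omega, indN, if_pos (hST hj)]
  · intro x hx y hy hxy
    have hgx := mem_ON_ge Δ nM hΔ x (hSO hx)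
    have hgy := mem_ON_ge Δ nM hΔ y (hSO hy)
    simp only at hxy
    omega

lemma not_mem_ON_pred (Δ nM : ℕ) (hΔ : 0 < Δ) (j : ℕ) (hj : j ∈ ON Δ nM) :
    j - Δ ∉ ON Δ nM := by
  intro hmem
  have h1 : 1 ≤ j / Δ := by
    have h2 := (Finset.mem_filter.mp hj).2
    generalize j / Δ = t at h2 ⊢
    omega
  have hp := (pred_divmod Δ j hΔ h1).1
  have h2 := (Finset.mem_filter.mp hj).2
  have h3 := (Finset.mem_filter.mp hmem).2
  rw [hp] at h3
  generalize j / Δ = t at h1 h2 h3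
  omega

lemma witness1 (Δ nM k Q x : ℕ) (hΔ : 0 < Δ) (hQ : Q < Δ)
    (hnM : nM = Δ * (2 * k + 1) + Q) (hx : x ≤ Δ * k + Q) :
    ∃ T ⊆ range nM, T.card = x ∧ ovN Δ nM (indN T) ≤ nM - 2 * x := by
  have hON : (ON Δ nM).card = Δ * k + Q := ON_card Δ nM k Q hΔ hQ hnM
  obtain ⟨T, hTO, hTcard⟩ := Finset.exists_subset_card_eq (show x ≤ (ON Δ nM).card by omega)
  have hTr : T ⊆ range nM := hTO.trans (Finset.filter_subset _ _)
  refine ⟨T, hTr, hTcard, ?_⟩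
  have hB := BsetN_ge Δ nM hΔ T T hTr (le_refl T) hTO
    (fun j hj hmem => not_mem_ON_pred Δ nM hΔ j (hTO hj) (hTO hmem))
  have hks := key_sum Δ nM (indN T)
  rw [wtN_indN nM T hTr, hTcard] at hks
  omega

lemma witness2 (Δ nM k Q x : ℕ) (hΔ : 0 < Δ) (hQ : Q < Δ)
    (hnM : nM = Δ * (2 * k + 1) + Q) (hx1 : Δ * k + Q ≤ x) (hx2 : x ≤ Δ * k + Δ) :
    ∃ T ⊆ range nM, T.card = x ∧ ovN Δ nM (indN T) ≤ Δ * k + Δ - x := by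
  classical
  have hON : (ON Δ nM).card = Δ * k + Q := ON_card Δ nM k Q hΔ hQ hnM
  have hDN : (DN Δ nM k).card = Δ - Q := DN_card Δ nM k Q hΔ hQ hnM
  have hQ' : nM % Δ = Q := by
    rw [hnM, Nat.mul_add_mod, Nat.mod_eq_of_lt hQ]
  obtain ⟨E, hED, hEcard⟩ := Finset.exists_subset_card_eq
    (show x - (Δ * k + Q) ≤ (DN Δ nM k).card by omega)
  have hdisj : Disjoint (ON Δ nM) E := by
    rw [Finset.disjoint_left]
    intro j hjO hjE
    have h1 := (Finset.mem_filter.mp hjO).2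
    have h2 := (Finset.mem_filter.mp (hED hjE)).2.2
    rw [h2] at h1
    omega
  set T := ON Δ nM ∪ E with hT
  have hTr : T ⊆ range nM := by
    intro j hj
    rcases Finset.mem_union.mp hj with h | h
    · exact Finset.filter_subset _ _ h
    · exact Finset.filter_subset _ _ (hED h)
  have hTcard : T.card = x := by
    rw [hT, Finset.card_union_of_disjoint hdisj, hON, hEcard]
    omega
  refine ⟨T, hTr, hTcard, ?_⟩
  have hpred : ∀ j ∈ ON Δ nM, j - Δ ∉ T := by
    intro j hj hmem
    rcases Finset.mem_union.mp hmem with h | h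
    · exact not_mem_ON_pred Δ nM hΔ j hj h
    · -- j - Δ ∈ E ⊆ DN : height 2k, residue ≥ Q
      have hD := Finset.mem_filter.mp (hED h)
      have hjn : j < nM := by
        have := (Finset.mem_filter.mp hj).1; rwa [Finset.mem_range] at this
      have h1 : 1 ≤ j / Δ := by
        have h2 := (Finset.mem_filter.mp hj).2
        generalize j / Δ = t at h2 ⊢
        omega
      obtain ⟨hpd, hpm⟩ := pred_divmod Δ j hΔ h1
      have hdiv : j / Δ = 2 * k + 1 := by
        have := hD.2.2
        omega
      have hmod : Q ≤ j % Δ := by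
        have := hD.2.1
        rw [hpm, hQ'] at this
        exact this
      have hd := Nat.div_add_mod j Δ
      rw [hdiv] at hd
      omega
  have hB := BsetN_ge Δ nM hΔ T (ON Δ nM) hTr Finset.subset_union_left
    (le_refl _) hpred
  rw [hON] at hB
  have hks := key_sum Δ nM (indN T)
  rw [wtN_indN nM T hTr, hTcard] at hks
  have hring : Δ * (2 * k + 1) = 2 * (Δ * k) + Δ := by ring
  omega

lemma witness3 (Δ nM k Q x : ℕ) (hΔ : 0 < Δ) (hQ : Q < Δ)
    (hnM : nM = Δ * (2 * k + 1) + Q) (hx1 : Δ * k + Δ ≤ x) (hx2 : x ≤ nM) :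
    ∃ T ⊆ range nM, T.card = x ∧ ovN Δ nM (indN T) = 0 := by
  classical
  have hON : (ON Δ nM).card = Δ * k + Q := ON_card Δ nM k Q hΔ hQ hnM
  have hDN : (DN Δ nM k).card = Δ - Q := DN_card Δ nM k Q hΔ hQ hnM
  have hQ' : nM % Δ = Q := by
    rw [hnM, Nat.mul_add_mod, Nat.mod_eq_of_lt hQ]
  have hl : nM / Δ = 2 * k + 1 := by
    rw [hnM, Nat.mul_add_div hΔ, Nat.div_eq_of_lt hQ, add_zero]
  set U := ON Δ nM ∪ DN Δ nM k with hU
  have hdisj : Disjoint (ON Δ nM) (DN Δ nM k) := by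
    rw [Finset.disjoint_left]
    intro j hjO hjD
    have h1 := (Finset.mem_filter.mp hjO).2
    have h2 := (Finset.mem_filter.mp hjD).2.2
    rw [h2] at h1
    omega
  have hUr : U ⊆ range nM := by
    intro j hj
    rcases Finset.mem_union.mp hj with h | h
    · exact Finset.filter_subset _ _ h
    · exact Finset.filter_subset _ _ h
  have hUcard : U.card = Δ * k + Δ := by
    rw [hU, Finset.card_union_of_disjoint hdisj, hON, hDN]
    omega
  obtain ⟨E, hEsub, hEcard⟩ := Finset.exists_subset_card_eq
    (show x - (Δ * k + Δ) ≤ (range nM \ U).card by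
      rw [Finset.card_sdiff_of_subset hUr, Finset.card_range, hUcard]
      omega)
  set T := U ∪ E with hT
  have hTr : T ⊆ range nM := by
    intro j hj
    rcases Finset.mem_union.mp hj with h | h
    · exact hUr h
    · exact (Finset.mem_sdiff.mp (hEsub h)).1
  have hdisj2 : Disjoint U E := by
    rw [Finset.disjoint_right]
    intro j hjE
    exact (Finset.mem_sdiff.mp (hEsub hjE)).2
  have hTcard : T.card = x := by
    rw [hT, Finset.card_union_of_disjoint hdisj2, hUcard, hEcard]
    omega
  refine ⟨T, hTr, hTcard, ?_⟩
  rw [ovN, Finset.card_eq_zero, Finset.filter_eq_empty_iff]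
  intro j hjr
  rw [Finset.mem_range] at hjr
  rintro ⟨hb0, himp⟩
  have hjT : j ∉ T := by
    intro hmem
    rw [indN, if_pos hmem] at hb0
    exact one_ne_zero hb0
  have hjO : j ∉ ON Δ nM := fun h => hjT (Finset.mem_union_left _ (Finset.mem_union_left _ h))
  have hjD : j ∉ DN Δ nM k := fun h => hjT (Finset.mem_union_left _ (Finset.mem_union_right _ h))
  have hr : j % Δ < Δ := Nat.mod_lt _ hΔ
  have hd := Nat.div_add_mod j Δ
  have heven : j / Δ % 2 = 0 := by
    by_contra hodd
    exact hjO (by simp only [ON, Finset.mem_filter, Finset.mem_range]; exact ⟨hjr, by omega⟩)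
  have hnD : ¬ (Q ≤ j % Δ ∧ j / Δ = 2 * k) := by
    intro hc
    exact hjD (by simp only [DN, Finset.mem_filter, Finset.mem_range, hQ']; exact ⟨hjr, hc⟩)
  have hhlt : j / Δ < 2 * k + 1 + (if j % Δ < Q then 1 else 0) := by
    have := (height_iff Δ nM (j % Δ) (j / Δ) hΔ hr).mp (by omega)
    rwa [hl, hQ'] at this
  have hsucc : j / Δ + 1 < 2 * k + 1 + (if j % Δ < Q then 1 else 0) := by
    by_cases hrQ : j % Δ < Q <;>
      simp only [hrQ, if_true, if_false] at hhlt hnD ⊢ <;>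
      generalize hgen : j / Δ = t at heven hhlt hnD ⊢ <;>
      omega
  have hlt2 : j + Δ < nM := by
    have := (height_iff Δ nM (j % Δ) (j / Δ + 1) hΔ hr).mpr
      (by rwa [hl, hQ'])
    have he : Δ * (j / Δ + 1) = Δ * (j / Δ) + Δ := by ring
    omega
  have hsO : j + Δ ∈ ON Δ nM := by
    simp only [ON, Finset.mem_filter, Finset.mem_range]
    refine ⟨hlt2, ?_⟩
    rw [Nat.add_div_right _ hΔ]
    generalize hgen : j / Δ = t at heven
    omega
  have := himp hlt2
  rw [indN, if_pos (Finset.mem_union_left _ (Finset.mem_union_left _ hsO))] at this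
  exact one_ne_zero this

/-- extension of a Fin-vector to ℕ -/
def extN {nM : ℕ} (a : Fin nM → ZMod 2) : ℕ → ZMod 2 :=
  fun n => if h : n < nM then a ⟨n, h⟩ else 0

lemma card_fin_filter (n : ℕ) (P : ℕ → Prop) [DecidablePred P] :
    (Finset.univ.filter (fun j : Fin n => P (j : ℕ))).card
      = ((range n).filter P).card := by
  rw [← Finset.card_image_of_injective (Finset.univ.filter (fun j : Fin n => P (j : ℕ))) Fin.val_injective]
  congr 1
  ext m
  simp only [Finset.mem_image, Finset.mem_filter, Finset.mem_univ, true_and,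
    Finset.mem_range]
  constructor
  · rintro ⟨j, hj, rfl⟩
    exact ⟨j.isLt, hj⟩
  · rintro ⟨hm, hP⟩
    exact ⟨⟨m, hm⟩, hP, rfl⟩

lemma wt_eq {nM : ℕ} (a : Fin nM → ZMod 2) : wt a = wtN nM (extN a) := by
  rw [wt, wtN, ← card_fin_filter nM (fun n => extN a n = 1)]
  congr 1
  apply Finset.filter_congr
  intro j _
  simp [extN, j.isLt]

lemma overlap_eq {nM : ℕ} (Δ : ℕ) (a : Fin nM → ZMod 2) :
    overlap Δ a = ovN Δ nM (extN a) := by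
  have step1 : overlap Δ a = ((range (nM + Δ)).filter
      (fun n => (n < nM → extN a n = 0) ∧ Δ ≤ n ∧ extN a (n - Δ) = 0)).card := by
    rw [overlap, ← card_fin_filter (nM + Δ)
      (fun n => (n < nM → extN a n = 0) ∧ Δ ≤ n ∧ extN a (n - Δ) = 0)]
    congr 1
    apply Finset.filter_congr
    intro i _
    constructor
    · rintro ⟨h1, h2⟩
      have hle : Δ ≤ (i : ℕ) := by
        by_contra hlt
        rw [gamma2, dif_neg hlt] at h2
        exact zero_ne_one h2
      rw [gamma2, dif_pos hle, sub_eq_self] at h2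
      have hsub : (i : ℕ) - Δ < nM := by have := i.isLt; omega
      refine ⟨?_, hle, ?_⟩
      · intro hlt
        rw [gamma1, dif_pos hlt, sub_eq_self] at h1
        rw [extN, dif_pos hlt]
        exact h1
      · rw [extN, dif_pos hsub]
        exact h2
    · rintro ⟨h1, hle, h2⟩
      have hsub : (i : ℕ) - Δ < nM := by have := i.isLt; omega
      constructor
      · rw [gamma1]
        by_cases hlt : (i : ℕ) < nM
        · rw [dif_pos hlt, sub_eq_self]
          have := h1 hlt
          rwa [extN, dif_pos hlt] at this
        · rw [dif_neg hlt]
      · rw [gamma2, dif_pos hle, sub_eq_self]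
        have := h2
        rwa [extN, dif_pos hsub] at this
  rw [step1, ovN]
  apply Finset.card_bij' (fun n _ => n - Δ) (fun m _ => m + Δ)
  · intro n hn
    simp only [Finset.mem_filter, Finset.mem_range] at hn ⊢
    obtain ⟨hr, h1, hle, h2⟩ := hn
    refine ⟨by omega, h2, ?_⟩
    intro hlt
    rw [show n - Δ + Δ = n by omega] at hlt ⊢
    exact h1 hlt
  · intro m hm
    simp only [Finset.mem_filter, Finset.mem_range] at hm ⊢
    obtain ⟨hr, h1, h2⟩ := hm
    refine ⟨by omega, ?_, by omega, ?_⟩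
    · intro hlt; exact h2 hlt
    · rw [show m + Δ - Δ = m by omega]; exact h1
  · intro n hn
    simp only [Finset.mem_filter, Finset.mem_range] at hn
    omega
  · intro m _
    omega

lemma extN_indN (nM : ℕ) (T : Finset ℕ) (hT : T ⊆ range nM) :
    extN (fun j : Fin nM => indN T (j : ℕ)) = indN T := by
  funext n
  rw [extN]
  by_cases h : n < nM
  · rw [dif_pos h]
  · rw [dif_neg h, indN, if_neg]
    intro hmem
    have := hT hmem
    rw [Finset.mem_range] at this
    omega

end RhoAux

/-- Closed form of `ρ` when `l = n_M div Δ` is odd (with `Q = n_M mod Δ`):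
`ρ(x) = n_M − 2x` for `0 ≤ x ≤ Q + Δ(l−1)/2`, `ρ(x) = Δ(l+1)/2 − x` for
`Q + Δ(l−1)/2 ≤ x ≤ Δ(l+1)/2`, and `ρ(x) = 0` for `Δ(l+1)/2 ≤ x ≤ n_M`. -/
theorem rho_closed_form_odd (Δ nM : ℕ) (hΔ : 1 ≤ Δ) (hOdd : Odd (nM / Δ)) :
    ∀ x : ℕ, x ≤ nM →
      (x ≤ nM % Δ + Δ * (nM / Δ - 1) / 2 → rho Δ nM x = nM - 2 * x) ∧
      (nM % Δ + Δ * (nM / Δ - 1) / 2 ≤ x → x ≤ Δ * (nM / Δ + 1) / 2 →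
        rho Δ nM x = Δ * (nM / Δ + 1) / 2 - x) ∧
      (Δ * (nM / Δ + 1) / 2 ≤ x → rho Δ nM x = 0) := by
  intro x hx
  obtain ⟨k, hk⟩ := hOdd
  have hk' : nM / Δ = 2 * k + 1 := hk
  have hΔ0 : 0 < Δ := hΔ
  have hQ : nM % Δ < Δ := Nat.mod_lt _ hΔ0
  have hnM : nM = Δ * (2 * k + 1) + nM % Δ := by
    conv_lhs => rw [← Nat.div_add_mod nM Δ, hk']
  have e1 : Δ * (nM / Δ - 1) / 2 = Δ * k := by
    rw [hk', show 2 * k + 1 - 1 = 2 * k from by omega,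
      show Δ * (2 * k) = Δ * k * 2 from by ring]
    exact Nat.mul_div_cancel _ two_pos
  have e2 : Δ * (nM / Δ + 1) / 2 = Δ * k + Δ := by
    rw [hk', show 2 * k + 1 + 1 = 2 * (k + 1) from by omega,
      show Δ * (2 * (k + 1)) = (Δ * k + Δ) * 2 from by ring]
    exact Nat.mul_div_cancel _ two_pos
  have hring : Δ * (2 * k + 1) = 2 * (Δ * k) + Δ := by ring
  refine ⟨?_, ?_, ?_⟩
  · -- first regime
    intro h1
    rw [e1] at h1
    have lb : ∀ y ∈ overlap Δ '' {a : Fin nM → ZMod 2 | wt a = x},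
        nM - 2 * x ≤ y := by
      rintro y ⟨a, ha, rfl⟩
      rw [RhoAux.overlap_eq]
      have hks := RhoAux.key_sum Δ nM (RhoAux.extN a)
      have hBle := RhoAux.BsetN_card_le_wtN Δ nM hΔ0 (RhoAux.extN a)
      have hw : RhoAux.wtN nM (RhoAux.extN a) = x := by
        rw [← RhoAux.wt_eq]; exact ha
      omega
    obtain ⟨T, hTr, hTcard, hTov⟩ :=
      RhoAux.witness1 Δ nM k (nM % Δ) x hΔ0 hQ hnM (by omega)
    set a : Fin nM → ZMod 2 := fun j => RhoAux.indN T (j : ℕ) with ha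
    have hext : RhoAux.extN a = RhoAux.indN T := RhoAux.extN_indN nM T hTr
    have hwa : wt a = x := by
      rw [RhoAux.wt_eq, hext, RhoAux.wtN_indN nM T hTr, hTcard]
    have hova : overlap Δ a ≤ nM - 2 * x := by
      rw [RhoAux.overlap_eq, hext]; exact hTov
    have hmemS : overlap Δ a ∈ overlap Δ '' {a : Fin nM → ZMod 2 | wt a = x} :=
      ⟨a, hwa, rfl⟩
    have heq : overlap Δ a = nM - 2 * x :=
      le_antisymm hova (lb _ hmemS)
    rw [rho]
    exact le_antisymm (Nat.sInf_le (heq ▸ hmemS)) (le_csInf ⟨_, hmemS⟩ lb)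
  · -- middle regime
    intro h1 h2
    rw [e1] at h1
    rw [e2] at h2 ⊢
    have lb : ∀ y ∈ overlap Δ '' {a : Fin nM → ZMod 2 | wt a = x},
        Δ * k + Δ - x ≤ y := by
      rintro y ⟨a, ha, rfl⟩
      rw [RhoAux.overlap_eq]
      have hks := RhoAux.key_sum Δ nM (RhoAux.extN a)
      have hBle := RhoAux.BsetN_card_le Δ nM k (nM % Δ) hΔ0 hQ hnM (RhoAux.extN a)
      have hw : RhoAux.wtN nM (RhoAux.extN a) = x := by
        rw [← RhoAux.wt_eq]; exact ha
      omega
    obtain ⟨T, hTr, hTcard, hTov⟩ :=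
      RhoAux.witness2 Δ nM k (nM % Δ) x hΔ0 hQ hnM (by omega) (by omega)
    set a : Fin nM → ZMod 2 := fun j => RhoAux.indN T (j : ℕ) with ha
    have hext : RhoAux.extN a = RhoAux.indN T := RhoAux.extN_indN nM T hTr
    have hwa : wt a = x := by
      rw [RhoAux.wt_eq, hext, RhoAux.wtN_indN nM T hTr, hTcard]
    have hova : overlap Δ a ≤ Δ * k + Δ - x := by
      rw [RhoAux.overlap_eq, hext]; exact hTov
    have hmemS : overlap Δ a ∈ overlap Δ '' {a : Fin nM → ZMod 2 | wt a = x} :=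
      ⟨a, hwa, rfl⟩
    have heq : overlap Δ a = Δ * k + Δ - x :=
      le_antisymm hova (lb _ hmemS)
    rw [rho]
    exact le_antisymm (Nat.sInf_le (heq ▸ hmemS)) (le_csInf ⟨_, hmemS⟩ lb)
  · -- last regime
    intro h1
    rw [e2] at h1
    obtain ⟨T, hTr, hTcard, hTov⟩ :=
      RhoAux.witness3 Δ nM k (nM % Δ) x hΔ0 hQ hnM (by omega) hx
    set a : Fin nM → ZMod 2 := fun j => RhoAux.indN T (j : ℕ) with ha
    have hext : RhoAux.extN a = RhoAux.indN T := RhoAux.extN_indN nM T hTr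
    have hwa : wt a = x := by
      rw [RhoAux.wt_eq, hext, RhoAux.wtN_indN nM T hTr, hTcard]
    have hova : overlap Δ a = 0 := by
      rw [RhoAux.overlap_eq, hext]; exact hTov
    have hmemS : (0 : ℕ) ∈ overlap Δ '' {a : Fin nM → ZMod 2 | wt a = x} :=
      ⟨a, hwa, hova⟩
    rw [rho]
    exact Nat.le_zero.mp (Nat.sInf_le hmemS)
end

section
/- Let n_1, n_2, n_3, n_M, n_D be natural numbers with n_1 ≥ n_2 and n_D + n_M ≤ min(n_2, n_3), and let q = max(n_1, n_3). Let N ≥ 1 be a natural number and let X_1, X_2, X_3 be mutually independent random matrices taking values in F_2^{q×N} on a finite (discrete) probability space. Define Y_1 = S^{q−n_1} X_1 ⊕ S^{q−n_2} X_2 ⊕ S^{q−n_D} X_3 and Y_2 = S^{q−n_M} X_1 ⊕ S^{q−n_M} X_2 ⊕ S^{q−n_3} X_3. Then I((X_1, X_2); Y_1) + 2·I(X_3; Y_2) ≤ N · (n_1 + 2n_3 − n_D − n_M), where I denotes mutual information with logarithm base 2. -/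
section Lib
open Finset Real
variable {Ω α β γ : Type*} [Fintype Ω] [DecidableEq α] [DecidableEq β] [DecidableEq γ]
variable {p : Ω → ℝ}

lemma prEq_nonneg (hp : ∀ ω, 0 ≤ p ω) (f : Ω → α) (a : α) : 0 ≤ prEq p f a :=
  Finset.sum_nonneg fun ω _ => hp ω

lemma sum_prEq [Fintype α] (f : Ω → α) : ∑ a, prEq p f a = ∑ ω, p ω :=
  Finset.sum_fiberwise_of_maps_to (fun ω _ => Finset.mem_univ (f ω)) p

lemma prEq_comp [Fintype α] (f : Ω → α) (φ : α → β) (b : β) :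
    prEq p (fun ω => φ (f ω)) b = ∑ a ∈ Finset.univ.filter (fun a => φ a = b), prEq p f a := by
  unfold prEq
  rw [← Finset.sum_fiberwise_of_maps_to
      (s := Finset.univ.filter (fun ω => φ (f ω) = b))
      (t := Finset.univ.filter (fun a => φ a = b)) (g := f)
      (fun ω hω => by
        simp only [Finset.mem_filter, Finset.mem_univ, true_and] at hω ⊢; exact hω) p]
  apply Finset.sum_congr rfl
  intro a ha
  simp only [Finset.mem_filter, Finset.mem_univ, true_and] at ha
  apply Finset.sum_congr _ (fun _ _ => rfl)
  ext ω
  simp only [Finset.mem_filter, Finset.mem_univ, true_and]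
  exact ⟨fun h => h.2, fun h => ⟨by rw [h]; exact ha, h⟩⟩

lemma prEq_marginal [Fintype β] (f : Ω → α) (g : Ω → β) (a : α) :
    prEq p f a = ∑ b, prEq p (fun ω => (f ω, g ω)) (a, b) := by
  unfold prEq
  rw [← Finset.sum_fiberwise_of_maps_to
      (s := Finset.univ.filter (fun ω => f ω = a)) (t := Finset.univ) (g := g)
      (fun ω _ => Finset.mem_univ (g ω)) p]
  apply Finset.sum_congr rfl
  intro b _
  apply Finset.sum_congr _ (fun _ _ => rfl)
  ext ω
  simp only [Finset.mem_filter, Finset.mem_univ, true_and, Prod.mk.injEq] <;> tauto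

lemma prEq_le_left [Fintype β] (hp : ∀ ω, 0 ≤ p ω) (f : Ω → α) (g : Ω → β) (a : α) (b : β) :
    prEq p (fun ω => (f ω, g ω)) (a, b) ≤ prEq p f a := by
  rw [prEq_marginal f g a]
  exact Finset.single_le_sum (f := fun b => prEq p (fun ω => (f ω, g ω)) (a, b))
    (fun b _ => prEq_nonneg hp _ _) (Finset.mem_univ b)

lemma prEq_swap (f : Ω → α) (g : Ω → β) (a : α) (b : β) :
    prEq p (fun ω => (g ω, f ω)) (b, a) = prEq p (fun ω => (f ω, g ω)) (a, b) := by
  unfold prEq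
  apply Finset.sum_congr _ (fun _ _ => rfl)
  ext ω
  simp only [Finset.mem_filter, Finset.mem_univ, true_and, Prod.mk.injEq] <;> tauto

lemma prEq_le_right [Fintype α] (hp : ∀ ω, 0 ≤ p ω) (f : Ω → α) (g : Ω → β) (a : α) (b : β) :
    prEq p (fun ω => (f ω, g ω)) (a, b) ≤ prEq p g b := by
  rw [← prEq_swap]
  exact prEq_le_left hp g f b a

/-- Gibbs' inequality. -/
lemma gibbs [Fintype α] (P Q : α → ℝ) (hP : ∀ a, 0 ≤ P a) (hQ : ∀ a, 0 ≤ Q a)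
    (hP1 : ∑ a, P a = 1) (hQ1 : ∑ a, Q a ≤ 1) (habs : ∀ a, Q a = 0 → P a = 0) :
    -∑ a, P a * Real.logb 2 (P a) ≤ -∑ a, P a * Real.logb 2 (Q a) := by
  rw [neg_le_neg_iff]
  have key : ∀ a, P a * Real.logb 2 (Q a) - P a * Real.logb 2 (P a)
      ≤ (Q a - P a) / Real.log 2 := by
    intro a
    have hlog2 : (0:ℝ) < Real.log 2 := Real.log_pos one_lt_two
    rcases eq_or_lt_of_le (hP a) with h0 | hpos
    · rw [← h0]
      simp only [zero_mul, sub_zero, zero_sub, neg_zero]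
      apply div_nonneg (hQ a) (le_of_lt hlog2)
    · have hQpos : 0 < Q a := by
        rcases eq_or_lt_of_le (hQ a) with h0' | h; · exact absurd (habs a h0'.symm) (by linarith)
        exact h
      have e : P a * Real.logb 2 (Q a) - P a * Real.logb 2 (P a)
          = (P a * Real.log (Q a / P a)) / Real.log 2 := by
        rw [Real.log_div (ne_of_gt hQpos) (ne_of_gt hpos), Real.logb, Real.logb]
        ring
      rw [e]
      have hnum : P a * Real.log (Q a / P a) ≤ Q a - P a := by
        calc P a * Real.log (Q a / P a) ≤ P a * (Q a / P a - 1) :=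
              mul_le_mul_of_nonneg_left (Real.log_le_sub_one_of_pos (by positivity)) (le_of_lt hpos)
          _ = Q a - P a := by field_simp
      gcongr
  calc ∑ a, P a * Real.logb 2 (Q a)
      = ∑ a, ((P a * Real.logb 2 (Q a) - P a * Real.logb 2 (P a)) + P a * Real.logb 2 (P a)) := by
        apply Finset.sum_congr rfl; intros; ring
    _ = ∑ a, (P a * Real.logb 2 (Q a) - P a * Real.logb 2 (P a)) + ∑ a, P a * Real.logb 2 (P a) := by
        rw [Finset.sum_add_distrib]
    _ ≤ ∑ a, (Q a - P a) / Real.log 2 + ∑ a, P a * Real.logb 2 (P a) := by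
        gcongr with a _
        · exact key a
    _ ≤ 0 + ∑ a, P a * Real.logb 2 (P a) := by
        gcongr
        rw [← Finset.sum_div, Finset.sum_sub_distrib, hP1]
        apply div_nonpos_of_nonpos_of_nonneg
        · linarith
        · exact le_of_lt (Real.log_pos one_lt_two)
    _ = ∑ a, P a * Real.logb 2 (P a) := by ring

end Lib

section Lib2
open Finset Real
variable {Ω α β γ : Type*} [Fintype Ω] [DecidableEq α] [DecidableEq β] [DecidableEq γ]
variable {p : Ω → ℝ}

lemma entropy_le_logCard [Fintype α] (hp : ∀ ω, 0 ≤ p ω) (hsum : ∑ ω, p ω = 1)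
    (f : Ω → α) : entropy2 p f ≤ Real.logb 2 (Fintype.card α) := by
  have hΩ : Nonempty Ω := by
    by_contra h
    rw [not_nonempty_iff] at h
    rw [Finset.univ_eq_empty, Finset.sum_empty] at hsum
    norm_num at hsum
  have hα : Nonempty α := ⟨f (Classical.arbitrary Ω)⟩
  have hcard : (0:ℝ) < (Fintype.card α : ℝ) := by
    have := Fintype.card_pos (α := α); positivity
  have h := gibbs (prEq p f) (fun _ => ((Fintype.card α : ℝ))⁻¹)
    (prEq_nonneg hp f) (fun _ => by positivity)
    (by rw [sum_prEq]; exact hsum)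
    (by rw [Finset.sum_const, Finset.card_univ, nsmul_eq_mul]; rw [mul_inv_cancel₀ (ne_of_gt hcard)])
    (fun a h => absurd h (by positivity))
  unfold entropy2
  refine le_trans h ?_
  rw [← Finset.sum_mul, sum_prEq, hsum, one_mul, Real.logb_inv]
  ring_nf
  exact le_refl _

lemma entropy_pair_le [Fintype α] [Fintype β] (hp : ∀ ω, 0 ≤ p ω) (hsum : ∑ ω, p ω = 1)
    (f : Ω → α) (g : Ω → β) :
    entropy2 p (fun ω => (f ω, g ω)) ≤ entropy2 p f + entropy2 p g := by
  set P := prEq p (fun ω => (f ω, g ω)) with hP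
  have h := gibbs P (fun ab => prEq p f ab.1 * prEq p g ab.2)
    (prEq_nonneg hp _) (fun ab => mul_nonneg (prEq_nonneg hp _ _) (prEq_nonneg hp _ _))
    (by rw [sum_prEq]; exact hsum)
    (by
      rw [← Finset.univ_product_univ, Finset.sum_product, ← Finset.sum_mul_sum,
        sum_prEq, sum_prEq, hsum, one_mul])
    (by
      rintro ⟨a, b⟩ hab
      rcases mul_eq_zero.mp hab with h | h
      · have h1 := prEq_le_left hp f g a b
        have h2 := prEq_nonneg hp (fun ω => (f ω, g ω)) (a, b)
        rw [h] at h1; linarith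
      · have h1 := prEq_le_right hp f g a b
        have h2 := prEq_nonneg hp (fun ω => (f ω, g ω)) (a, b)
        rw [h] at h1; linarith)
  refine le_trans h (le_of_eq ?_)
  have split : ∀ ab : α × β, P ab * Real.logb 2 (prEq p f ab.1 * prEq p g ab.2)
      = P ab * Real.logb 2 (prEq p f ab.1) + P ab * Real.logb 2 (prEq p g ab.2) := by
    rintro ⟨a, b⟩
    rcases eq_or_lt_of_le (prEq_nonneg hp (fun ω => (f ω, g ω)) (a,b)) with h0 | hpos
    · rw [hP, ← h0]; ring
    · have hfa : prEq p f a ≠ 0 := by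
        have h1 := prEq_le_left hp f g a b; intro hz; rw [hz] at h1
        have h2 : P (a,b) ≤ 0 := h1; linarith
      have hgb : prEq p g b ≠ 0 := by
        have h1 := prEq_le_right hp f g a b; intro hz; rw [hz] at h1
        have h2 : P (a,b) ≤ 0 := h1; linarith
      rw [Real.logb_mul hfa hgb]; ring
  rw [Finset.sum_congr rfl (fun ab _ => split ab), Finset.sum_add_distrib, neg_add]
  congr 1
  · unfold entropy2
    congr 1
    rw [Fintype.sum_prod_type]
    apply Finset.sum_congr rfl
    intro a _
    have hfst : ∀ y : β, prEq p f ((a, y).1) = prEq p f a := fun _ => rfl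
    simp only [hfst]
    rw [← Finset.sum_mul, ← prEq_marginal]
  · unfold entropy2
    congr 1
    rw [Fintype.sum_prod_type, Finset.sum_comm]
    apply Finset.sum_congr rfl
    intro b _
    have hsnd : ∀ a : α, prEq p g ((a, b).2) = prEq p g b := fun _ => rfl
    simp only [hsnd]
    have hsw : ∀ a : α, P (a, b) = prEq p (fun ω => (g ω, f ω)) (b, a) := by
      intro a; rw [hP, ← prEq_swap]
    simp only [hsw]
    rw [← Finset.sum_mul, ← prEq_marginal]

lemma entropy_left_le_pair [Fintype α] [Fintype β] (hp : ∀ ω, 0 ≤ p ω)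
    (f : Ω → α) (g : Ω → β) :
    entropy2 p f ≤ entropy2 p (fun ω => (f ω, g ω)) := by
  unfold entropy2
  rw [neg_le_neg_iff]
  calc ∑ ab : α × β, prEq p (fun ω => (f ω, g ω)) ab * Real.logb 2 (prEq p (fun ω => (f ω, g ω)) ab)
      ≤ ∑ ab : α × β, prEq p (fun ω => (f ω, g ω)) ab * Real.logb 2 (prEq p f ab.1) := by
        apply Finset.sum_le_sum
        rintro ⟨a, b⟩ _
        rcases eq_or_lt_of_le (prEq_nonneg hp (fun ω => (f ω, g ω)) (a,b)) with h0 | hpos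
        · rw [← h0]; simp
        · apply mul_le_mul_of_nonneg_left _ (le_of_lt hpos)
          have hle := prEq_le_left hp f g a b
          exact (Real.logb_le_logb one_lt_two hpos (lt_of_lt_of_le hpos hle)).mpr hle
    _ = ∑ a, prEq p f a * Real.logb 2 (prEq p f a) := by
        rw [Fintype.sum_prod_type]
        apply Finset.sum_congr rfl
        intro a _
        have hfst : ∀ y : β, prEq p f ((a, y).1) = prEq p f a := fun _ => rfl
        simp only [hfst]
        rw [← Finset.sum_mul, ← prEq_marginal]

lemma entropy_swap [Fintype α] [Fintype β] (f : Ω → α) (g : Ω → β) :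
    entropy2 p (fun ω => (g ω, f ω)) = entropy2 p (fun ω => (f ω, g ω)) := by
  unfold entropy2
  congr 1
  apply Fintype.sum_equiv (Equiv.prodComm β α)
  rintro ⟨b, a⟩
  simp only [Equiv.prodComm_apply, Prod.swap]
  rw [prEq_swap]

lemma entropy_right_le_pair [Fintype α] [Fintype β] (hp : ∀ ω, 0 ≤ p ω)
    (f : Ω → α) (g : Ω → β) :
    entropy2 p g ≤ entropy2 p (fun ω => (f ω, g ω)) := by
  rw [← entropy_swap f g]
  exact entropy_left_le_pair hp g f

lemma entropy_comp_inj [Fintype α] [Fintype β] (f : Ω → α) (ψ : α → β)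
    (hψ : Function.Injective ψ) :
    entropy2 p (fun ω => ψ (f ω)) = entropy2 p f := by
  unfold entropy2
  congr 1
  rw [← Finset.sum_subset (Finset.subset_univ (Finset.univ.image ψ))]
  · rw [Finset.sum_image (fun x _ y _ h => hψ h)]
    apply Finset.sum_congr rfl
    intro a _
    have : prEq p (fun ω => ψ (f ω)) (ψ a) = prEq p f a := by
      unfold prEq
      apply Finset.sum_congr _ (fun _ _ => rfl)
      ext ω
      simp only [Finset.mem_filter, Finset.mem_univ, true_and]
      exact ⟨fun h => hψ h, fun h => by rw [h]⟩
    rw [this]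
  · intro b _ hb
    have : prEq p (fun ω => ψ (f ω)) b = 0 := by
      unfold prEq
      apply Finset.sum_eq_zero
      intro ω hω
      simp only [Finset.mem_filter, Finset.mem_univ, true_and] at hω
      exact absurd (hω ▸ Finset.mem_image_of_mem ψ (Finset.mem_univ (f ω))) hb
    rw [this]
    simp

lemma entropy_comp_le [Fintype α] [Fintype β] (hp : ∀ ω, 0 ≤ p ω) (f : Ω → α) (φ : α → β) :
    entropy2 p (fun ω => φ (f ω)) ≤ entropy2 p f := by
  have h1 : entropy2 p (fun ω => (φ (f ω), f ω)) = entropy2 p f :=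
    entropy_comp_inj f (fun a => (φ a, a)) (fun x y h => (Prod.mk.injEq _ _ _ _ ▸ h).2)
  calc entropy2 p (fun ω => φ (f ω)) ≤ entropy2 p (fun ω => (φ (f ω), f ω)) :=
        entropy_left_le_pair hp _ f
    _ = entropy2 p f := h1

lemma entropy_indep_pair [Fintype α] [Fintype β] (hp : ∀ ω, 0 ≤ p ω) (hsum : ∑ ω, p ω = 1)
    (f : Ω → α) (g : Ω → β) (h : IndepRV p f g) :
    entropy2 p (fun ω => (f ω, g ω)) = entropy2 p f + entropy2 p g := by
  have hf1 : ∑ a, prEq p f a = 1 := by rw [sum_prEq]; exact hsum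
  have hg1 : ∑ b, prEq p g b = 1 := by rw [sum_prEq]; exact hsum
  have key : ∀ a b, prEq p f a * prEq p g b * Real.logb 2 (prEq p f a * prEq p g b)
      = (prEq p f a * Real.logb 2 (prEq p f a)) * prEq p g b
        + prEq p f a * (prEq p g b * Real.logb 2 (prEq p g b)) := by
    intro a b
    rcases eq_or_lt_of_le (prEq_nonneg hp f a) with h0 | hposa
    · rw [← h0]; ring
    rcases eq_or_lt_of_le (prEq_nonneg hp g b) with h0 | hposb
    · rw [← h0]; ring
    rw [Real.logb_mul (ne_of_gt hposa) (ne_of_gt hposb)]; ring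
  unfold entropy2
  rw [Fintype.sum_prod_type]
  have inner : ∀ a : α, ∑ b : β, prEq p (fun ω => (f ω, g ω)) (a, b)
        * Real.logb 2 (prEq p (fun ω => (f ω, g ω)) (a, b))
      = (prEq p f a * Real.logb 2 (prEq p f a))
        + prEq p f a * (∑ b, prEq p g b * Real.logb 2 (prEq p g b)) := by
    intro a
    have e1 : ∀ b : β, prEq p (fun ω => (f ω, g ω)) (a, b)
          * Real.logb 2 (prEq p (fun ω => (f ω, g ω)) (a, b))
        = (prEq p f a * Real.logb 2 (prEq p f a)) * prEq p g b
          + prEq p f a * (prEq p g b * Real.logb 2 (prEq p g b)) := by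
      intro b; rw [h a b]; exact key a b
    rw [Finset.sum_congr rfl (fun b _ => e1 b), Finset.sum_add_distrib,
      ← Finset.mul_sum, ← Finset.mul_sum, hg1, mul_one]
  rw [Finset.sum_congr rfl (fun a _ => inner a), Finset.sum_add_distrib,
    ← Finset.sum_mul, hf1, one_mul, neg_add]

end Lib2

section Lib3
open Finset Real
variable {Ω α β γ δ : Type*} [Fintype Ω] [DecidableEq α] [DecidableEq β] [DecidableEq γ]
  [DecidableEq δ] {p : Ω → ℝ}

lemma indepRV_symm (f : Ω → α) (g : Ω → β) (h : IndepRV p f g) : IndepRV p g f := by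
  intro b a
  rw [prEq_swap, h a b, mul_comm]

lemma indepRV_comp [Fintype α] [Fintype β] (f : Ω → α) (g : Ω → β) (h : IndepRV p f g)
    (φ : α → γ) (ψ : β → δ) :
    IndepRV p (fun ω => φ (f ω)) (fun ω => ψ (g ω)) := by
  intro a' b'
  have e1 : prEq p (fun ω => (φ (f ω), ψ (g ω))) (a', b')
      = prEq p (fun ω => Prod.map φ ψ (f ω, g ω)) (a', b') := rfl
  rw [e1, prEq_comp (fun ω => (f ω, g ω)) (Prod.map φ ψ) (a', b')]
  have e2 : Finset.univ.filter (fun ab : α × β => Prod.map φ ψ ab = (a', b'))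
      = Finset.univ.filter (fun ab : α × β => φ ab.1 = a' ∧ ψ ab.2 = b') := by
    ext ab
    simp [Prod.ext_iff]
  rw [e2, ← Finset.univ_product_univ,
    Finset.filter_product (fun a => φ a = a') (fun b => ψ b = b'), Finset.sum_product]
  rw [prEq_comp f φ a', prEq_comp g ψ b', Finset.sum_mul_sum]
  apply Finset.sum_congr rfl
  intro a _
  apply Finset.sum_congr rfl
  intro b _
  exact h a b

lemma mutIndep3_facts [Fintype α] [Fintype β] [Fintype γ] (hsum : ∑ ω, p ω = 1)
    (X1 : Ω → α) (X2 : Ω → β) (X3 : Ω → γ) (h : MutIndep3 p X1 X2 X3) :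
    IndepRV p (fun ω => (X1 ω, X2 ω)) X3 ∧ IndepRV p X1 X2 := by
  have htriple : ∀ a b c, prEq p (fun ω => ((X1 ω, X2 ω), X3 ω)) ((a, b), c)
      = prEq p X1 a * prEq p X2 b * prEq p X3 c := by
    intro a b c
    rw [← h a b c]
    unfold prEq
    apply Finset.sum_congr _ (fun _ _ => rfl)
    ext ω
    simp only [Finset.mem_filter, Finset.mem_univ, true_and, Prod.mk.injEq] <;> tauto
  have hpair : ∀ a b, prEq p (fun ω => (X1 ω, X2 ω)) (a, b) = prEq p X1 a * prEq p X2 b := by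
    intro a b
    rw [prEq_marginal (fun ω => (X1 ω, X2 ω)) X3 (a, b)]
    have : ∀ c, prEq p (fun ω => ((X1 ω, X2 ω), X3 ω)) ((a, b), c)
        = prEq p X1 a * prEq p X2 b * prEq p X3 c := fun c => htriple a b c
    rw [Finset.sum_congr rfl (fun c _ => this c), ← Finset.mul_sum, sum_prEq, hsum, mul_one]
  constructor
  · rintro ⟨a, b⟩ c
    rw [htriple a b c, hpair a b]
  · intro a b
    exact hpair a b

end Lib3

section App
open Finset Real

variable {Ω : Type*} [Fintype Ω] {p : Ω → ℝ}

lemma entropy_congr {α : Type*} [Fintype α] [DecidableEq α] (f g : Ω → α)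
    (h : ∀ ω, f ω = g ω) : entropy2 p f = entropy2 p g := by
  have : f = g := funext h
  rw [this]

lemma entropy_le_of_det {α β : Type*} [Fintype α] [DecidableEq α] [Fintype β] [DecidableEq β]
    (hp : ∀ ω, 0 ≤ p ω) (f : Ω → α) (g : Ω → β) (F : β → α) (h : ∀ ω, F (g ω) = f ω) :
    entropy2 p f ≤ entropy2 p g := by
  rw [← entropy_congr (fun ω => F (g ω)) f h]
  exact entropy_comp_le hp g F

lemma entropy_matrix_le (hp : ∀ ω, 0 ≤ p ω) (hsum : ∑ ω, p ω = 1) (k N : ℕ)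
    (f : Ω → Matrix (Fin k) (Fin N) (ZMod 2)) :
    entropy2 p f ≤ (k : ℝ) * N := by
  refine le_trans (entropy_le_logCard hp hsum f) ?_
  have hc : Fintype.card (Matrix (Fin k) (Fin N) (ZMod 2)) = 2 ^ (k * N) := by
    rw [show (2:ℕ)^(k*N) = (2^N)^k by rw [← pow_mul, mul_comm]]
    rw [show Fintype.card (Matrix (Fin k) (Fin N) (ZMod 2))
        = Fintype.card (Fin k → Fin N → ZMod 2) from rfl]
    rw [Fintype.card_fun, Fintype.card_fun]
    simp
  rw [hc]
  push_cast
  rw [Real.logb_pow, Real.logb_self_eq_one one_lt_two, mul_one]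
  exact le_of_eq (by push_cast; ring)

/-- Extract `k` rows starting at row `a`. -/
def rowSeg (a k : ℕ) {r c : ℕ} (h : a + k ≤ r) (M : Matrix (Fin r) (Fin c) (ZMod 2)) :
    Matrix (Fin k) (Fin c) (ZMod 2) :=
  fun i j => M ⟨a + (i : ℕ), by have := i.isLt; omega⟩ j

/-- Embed a `k`-row matrix into the bottom `k` rows of a `q`-row matrix. -/
def botEmbed (k : ℕ) {q c : ℕ} (h : k ≤ q) (u : Matrix (Fin k) (Fin c) (ZMod 2)) :
    Matrix (Fin q) (Fin c) (ZMod 2) :=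
  fun i j => if hh : q - k ≤ (i : ℕ) then u ⟨(i : ℕ) - (q - k), by have := i.isLt; omega⟩ j else 0

lemma matrix_app_congr {r c : ℕ} (M : Matrix (Fin r) (Fin c) (ZMod 2)) {v w : ℕ}
    (hv : v < r) (hw : w < r) (j : Fin c) (hvw : v = w) : M ⟨v, hv⟩ j = M ⟨w, hw⟩ j := by
  subst hvw; rfl

lemma rowSeg_botEmbed (k : ℕ) {q c : ℕ} (h : k ≤ q) (hs : q - k + k ≤ q)
    (u : Matrix (Fin k) (Fin c) (ZMod 2)) :
    rowSeg (q - k) k hs (botEmbed k h u) = u := by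
  funext i j
  unfold rowSeg botEmbed
  rw [dif_pos (by omega : q - k ≤ q - k + (i:ℕ))]
  have : q - k + (i:ℕ) - (q - k) = (i:ℕ) := by omega
  simp only [this, Fin.eta]

lemma botEmbed_injective (k : ℕ) {q c : ℕ} (h : k ≤ q) :
    Function.Injective (botEmbed (q := q) (c := c) k h) := by
  intro u v huv
  have hs : q - k + k ≤ q := by omega
  rw [← rowSeg_botEmbed k h hs u, ← rowSeg_botEmbed k h hs v, huv]

lemma shiftS_eq_botEmbed {q c : ℕ} (k : ℕ) (h : k ≤ q) (h0 : 0 + k ≤ q)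
    (M : Matrix (Fin q) (Fin c) (ZMod 2)) :
    shiftS (q - k) M = botEmbed k h (rowSeg 0 k h0 M) := by
  funext i j
  unfold shiftS botEmbed rowSeg
  by_cases hc : q - k ≤ (i : ℕ)
  · rw [dif_pos hc, dif_pos hc]
    exact matrix_app_congr M _ _ j (by simp)
  · rw [dif_neg hc, dif_neg hc]

lemma botEmbed_add {q c : ℕ} (k : ℕ) (h : k ≤ q) (u v : Matrix (Fin k) (Fin c) (ZMod 2)) :
    botEmbed k h (u + v) = botEmbed k h u + botEmbed k h v := by
  funext i j
  unfold botEmbed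
  by_cases hc : q - k ≤ (i : ℕ)
  · show botEmbed k h (u + v) i j = botEmbed k h u i j + botEmbed k h v i j
    simp only [botEmbed, dif_pos hc, Matrix.add_apply]
  · show botEmbed k h (u + v) i j = botEmbed k h u i j + botEmbed k h v i j
    simp only [botEmbed, dif_neg hc, Matrix.add_apply, add_zero]

end App

section Mats
open Matrix

variable {c : ℕ}

/-- Reconstruct a `q`-row received matrix from its informative row segments
(rows `[q-n1, q-nD)` and rows `[q-nD, q)`). -/
def recPQ (q n1 nD : ℕ) {c : ℕ} (h1 : n1 ≤ q) (hD : nD ≤ n1)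
    (t : Matrix (Fin (n1 - nD)) (Fin c) (ZMod 2) × Matrix (Fin nD) (Fin c) (ZMod 2)) :
    Matrix (Fin q) (Fin c) (ZMod 2) :=
  fun i j =>
    if hd : q - nD ≤ (i : ℕ) then t.2 ⟨(i : ℕ) - (q - nD), by have := i.isLt; omega⟩ j
    else if hn : q - n1 ≤ (i : ℕ) then t.1 ⟨(i : ℕ) - (q - n1), by have := i.isLt; omega⟩ j
    else 0

lemma recPQ_eq (q n1 n2 n3 nD : ℕ) {c : ℕ} (hq1 : n1 ≤ q) (hq3 : n3 ≤ q)
    (h12 : n2 ≤ n1) (hD2 : nD ≤ n2) (hD3 : nD ≤ n3)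
    (x1 x2 x3 : Matrix (Fin q) (Fin c) (ZMod 2))
    (Y : Matrix (Fin q) (Fin c) (ZMod 2))
    (hY : Y = shiftS (q - n1) x1 + shiftS (q - n2) x2 + shiftS (q - nD) x3)
    (hA : q - n1 + (n1 - nD) ≤ q) (hB : q - nD + nD ≤ q) :
    recPQ q n1 nD hq1 (le_trans hD2 h12)
      (rowSeg (q - n1) (n1 - nD) hA Y, rowSeg (q - nD) nD hB Y) = Y := by
  funext i j
  unfold recPQ
  by_cases hd : q - nD ≤ (i : ℕ)
  · rw [dif_pos hd]
    unfold rowSeg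
    exact matrix_app_congr Y _ i.isLt j (by first | omega | (simp only [Fin.val_mk]; omega) | simp | (simp; omega))
  · rw [dif_neg hd]
    by_cases hn : q - n1 ≤ (i : ℕ)
    · rw [dif_pos hn]
      unfold rowSeg
      exact matrix_app_congr Y _ i.isLt j (by first | omega | (simp only [Fin.val_mk]; omega) | simp | (simp; omega))
    · rw [dif_neg hn]
      rw [hY]
      simp only [Matrix.add_apply]
      unfold shiftS
      rw [dif_neg (by omega : ¬ (q - n1 ≤ (i:ℕ))),
        dif_neg (by omega : ¬ (q - n2 ≤ (i:ℕ))),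
        dif_neg (by omega : ¬ (q - nD ≤ (i:ℕ)))]
      simp

/-- Reconstruct rows `[q-n1, q-nD)` of `Y1` from the two top input segments and
the residual rows. -/
def recP (n1 n2 nD nM : ℕ) {c : ℕ} (hM : nM ≤ n1 - nD)
    (t : Matrix (Fin nM) (Fin c) (ZMod 2) × Matrix (Fin nM) (Fin c) (ZMod 2)
      × Matrix (Fin (n1 - nD - nM)) (Fin c) (ZMod 2)) :
    Matrix (Fin (n1 - nD)) (Fin c) (ZMod 2) :=
  fun i j =>
    if hm : nM ≤ (i : ℕ) then t.2.2 ⟨(i : ℕ) - nM, by have := i.isLt; omega⟩ j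
    else t.1 ⟨(i : ℕ), by omega⟩ j
      + (if hmm : n1 - n2 ≤ (i : ℕ) then t.2.1 ⟨(i : ℕ) - (n1 - n2), by omega⟩ j else 0)

lemma recP_eq (q n1 n2 n3 nD nM : ℕ) {c : ℕ} (hq1 : n1 ≤ q) (hq3 : n3 ≤ q)
    (h12 : n2 ≤ n1) (h2 : nD + nM ≤ n2) (hM : nM ≤ n1 - nD)
    (x1 x2 x3 : Matrix (Fin q) (Fin c) (ZMod 2))
    (Y : Matrix (Fin q) (Fin c) (ZMod 2))
    (hY : Y = shiftS (q - n1) x1 + shiftS (q - n2) x2 + shiftS (q - nD) x3)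
    (hA : q - n1 + (n1 - nD) ≤ q) (h01 : 0 + nM ≤ q) (h02 : 0 + nM ≤ q)
    (hR : nM + (n1 - nD - nM) ≤ n1 - nD) :
    recP n1 n2 nD nM hM
      (rowSeg 0 nM h01 x1, rowSeg 0 nM h02 x2,
        rowSeg nM (n1 - nD - nM) hR (rowSeg (q - n1) (n1 - nD) hA Y))
      = rowSeg (q - n1) (n1 - nD) hA Y := by
  funext i j
  unfold recP
  by_cases hm : nM ≤ (i : ℕ)
  · rw [dif_pos hm]
    unfold rowSeg
    exact matrix_app_congr Y _ (by omega) j (by first | omega | (simp only [Fin.val_mk]; omega) | simp | (simp; omega))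
  · rw [dif_neg hm]
    have hiY : rowSeg (q - n1) (n1 - nD) hA Y i j
        = Y ⟨q - n1 + (i : ℕ), by have := i.isLt; omega⟩ j := rfl
    rw [hiY, hY]
    simp only [Matrix.add_apply]
    unfold shiftS rowSeg
    rw [dif_pos (by omega : q - n1 ≤ q - n1 + (i:ℕ)),
      dif_neg (by have := i.isLt; omega : ¬ (q - nD ≤ q - n1 + (i:ℕ)))]
    by_cases hmm : n1 - n2 ≤ (i : ℕ)
    · rw [dif_pos hmm, dif_pos (by omega : q - n2 ≤ q - n1 + (i:ℕ))]
      rw [add_zero]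
      congr 1
      · exact matrix_app_congr x1 _ _ j (by first | omega | (simp only [Fin.val_mk]; omega) | simp | (simp; omega))
      · exact matrix_app_congr x2 _ _ j (by first | omega | (simp only [Fin.val_mk]; omega) | simp | (simp; omega))
    · rw [dif_neg hmm, dif_neg (by omega : ¬ (q - n2 ≤ q - n1 + (i:ℕ)))]
      simp only [add_zero]
      exact matrix_app_congr x1 _ _ j (by first | omega | (simp only [Fin.val_mk]; omega) | simp | (simp; omega))

/-- Reconstruct `Y2` from its rows `[q-n3, q-nM)` and its bottom `nM` rows. -/
def recTG (q n3 nM : ℕ) {c : ℕ} (hM : nM ≤ n3) (h3 : n3 ≤ q)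
    (t : Matrix (Fin (n3 - nM)) (Fin c) (ZMod 2) × Matrix (Fin nM) (Fin c) (ZMod 2)) :
    Matrix (Fin q) (Fin c) (ZMod 2) :=
  fun i j =>
    if hm : q - nM ≤ (i : ℕ) then t.2 ⟨(i : ℕ) - (q - nM), by have := i.isLt; omega⟩ j
    else if h3' : q - n3 ≤ (i : ℕ) then t.1 ⟨(i : ℕ) - (q - n3), by omega⟩ j
    else 0

lemma recTG_eq (q n3 nM : ℕ) {c : ℕ} (hM3 : nM ≤ n3) (hq3 : n3 ≤ q)
    (x1 x2 x3 : Matrix (Fin q) (Fin c) (ZMod 2))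
    (Y : Matrix (Fin q) (Fin c) (ZMod 2))
    (hY : Y = shiftS (q - nM) x1 + shiftS (q - nM) x2 + shiftS (q - n3) x3)
    (hA : q - n3 + (n3 - nM) ≤ q) (hB : q - nM + nM ≤ q) :
    recTG q n3 nM hM3 hq3
      (rowSeg (q - n3) (n3 - nM) hA Y, rowSeg (q - nM) nM hB Y) = Y := by
  funext i j
  unfold recTG
  by_cases hm : q - nM ≤ (i : ℕ)
  · rw [dif_pos hm]
    unfold rowSeg
    exact matrix_app_congr Y _ i.isLt j (by first | omega | (simp only [Fin.val_mk]; omega) | simp | (simp; omega))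
  · rw [dif_neg hm]
    by_cases h3' : q - n3 ≤ (i : ℕ)
    · rw [dif_pos h3']
      unfold rowSeg
      exact matrix_app_congr Y _ i.isLt j (by first | omega | (simp only [Fin.val_mk]; omega) | simp | (simp; omega))
    · rw [dif_neg h3']
      rw [hY]
      simp only [Matrix.add_apply]
      unfold shiftS
      rw [dif_neg (by omega : ¬ (q - nM ≤ (i:ℕ))), dif_neg (by omega : ¬ (q - nM ≤ (i:ℕ))),
        dif_neg (by omega : ¬ (q - n3 ≤ (i:ℕ)))]
      simp

/-- Reconstruct rows `[q-n3, q-nM)` of `Y2` (the clear `X3` rows) from the top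
`nD` rows and the middle rows of `X3`. -/
def recDM (n3 nM nD : ℕ) {c : ℕ}
    (t : Matrix (Fin nD) (Fin c) (ZMod 2) × Matrix (Fin (n3 - nM - nD)) (Fin c) (ZMod 2)) :
    Matrix (Fin (n3 - nM)) (Fin c) (ZMod 2) :=
  fun i j =>
    if hd : (i : ℕ) < nD then t.1 ⟨(i : ℕ), hd⟩ j
    else t.2 ⟨(i : ℕ) - nD, by have := i.isLt; omega⟩ j

lemma recDM_eq (q n3 nM nD : ℕ) {c : ℕ} (h3 : nD + nM ≤ n3) (hq3 : n3 ≤ q)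
    (x1 x2 x3 : Matrix (Fin q) (Fin c) (ZMod 2))
    (Y : Matrix (Fin q) (Fin c) (ZMod 2))
    (hY : Y = shiftS (q - nM) x1 + shiftS (q - nM) x2 + shiftS (q - n3) x3)
    (hA : q - n3 + (n3 - nM) ≤ q) (hD0 : 0 + nD ≤ q) (hMid : nD + (n3 - nM - nD) ≤ q) :
    recDM n3 nM nD (rowSeg 0 nD hD0 x3, rowSeg nD (n3 - nM - nD) hMid x3)
      = rowSeg (q - n3) (n3 - nM) hA Y := by
  funext i j
  unfold recDM
  have hiY : rowSeg (q - n3) (n3 - nM) hA Y i j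
      = Y ⟨q - n3 + (i : ℕ), by have := i.isLt; omega⟩ j := rfl
  have hYval : Y ⟨q - n3 + (i : ℕ), by have := i.isLt; omega⟩ j
      = x3 ⟨(i : ℕ), by have := i.isLt; omega⟩ j := by
    rw [hY]
    simp only [Matrix.add_apply]
    unfold shiftS
    simp only [Fin.val_mk]
    rw [dif_neg (by have := i.isLt; omega : ¬ (q - nM ≤ q - n3 + (i:ℕ))),
      dif_neg (by have := i.isLt; omega : ¬ (q - nM ≤ q - n3 + (i:ℕ))),
      dif_pos (by omega : q - n3 ≤ q - n3 + (i:ℕ))]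
    rw [zero_add, zero_add]
    exact matrix_app_congr x3 _ _ j (by first | omega | (simp only [Fin.val_mk]; omega) | simp | (simp; omega))
  rw [hiY, hYval]
  by_cases hd : (i : ℕ) < nD
  · rw [dif_pos hd]
    exact matrix_app_congr x3 _ _ j (by simp)
  · rw [dif_neg hd]
    exact matrix_app_congr x3 _ _ j (by first | omega | (simp only [Fin.val_mk]; omega) | simp | (simp; omega))

end Mats


set_option maxHeartbeats 2000000 in
/-- Converse bound (8): for mutually independent inputs,
`I((X₁,X₂); Y₁) + 2·I(X₃; Y₂) ≤ N·(n₁ + 2n₃ − n_D − n_M)`. -/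
theorem converse_bound_eight {Ω : Type} [Fintype Ω] (n1 n2 n3 nM nD N : ℕ)
    (h12 : n2 ≤ n1) (hweak : nD + nM ≤ min n2 n3) (hN : 1 ≤ N)
    (p : Ω → ℝ) (hp : ∀ ω, 0 ≤ p ω) (hsum : ∑ ω, p ω = 1)
    (X1 X2 X3 : Ω → Matrix (Fin (max n1 n3)) (Fin N) (ZMod 2))
    (hindep : MutIndep3 p X1 X2 X3) :
    mutInfo2 p (fun ω => (X1 ω, X2 ω))
        (fun ω => shiftS (max n1 n3 - n1) (X1 ω)
          + shiftS (max n1 n3 - n2) (X2 ω)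
          + shiftS (max n1 n3 - nD) (X3 ω))
      + 2 * mutInfo2 p X3
        (fun ω => shiftS (max n1 n3 - nM) (X1 ω)
          + shiftS (max n1 n3 - nM) (X2 ω)
          + shiftS (max n1 n3 - n3) (X3 ω))
      ≤ (N : ℝ) * ((n1 : ℝ) + 2 * (n3 : ℝ) - (nD : ℝ) - (nM : ℝ)) := by
  have h2 : nD + nM ≤ n2 := le_trans hweak (min_le_left _ _)
  have h3 : nD + nM ≤ n3 := le_trans hweak (min_le_right _ _)
  obtain ⟨hI123, hI12⟩ := mutIndep3_facts hsum X1 X2 X3 hindep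
  have hq1 : n1 ≤ max n1 n3 := le_max_left _ _
  have hq3 : n3 ≤ max n1 n3 := le_max_right _ _
  set Y1 := fun ω => shiftS ((max n1 n3) - n1) (X1 ω) + shiftS ((max n1 n3) - n2) (X2 ω) + shiftS ((max n1 n3) - nD) (X3 ω)
    with hY1
  set Y2 := fun ω => shiftS ((max n1 n3) - nM) (X1 ω) + shiftS ((max n1 n3) - nM) (X2 ω) + shiftS ((max n1 n3) - n3) (X3 ω)
    with hY2
  have hD0 : 0 + nD ≤ (max n1 n3) := by omega
  have hM0 : 0 + nM ≤ (max n1 n3) := by omega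
  have hDq : nD ≤ (max n1 n3) := by omega
  have hMq : nM ≤ (max n1 n3) := by omega
  have hPA : (max n1 n3) - n1 + (n1 - nD) ≤ (max n1 n3) := by omega
  have hQB : (max n1 n3) - nD + nD ≤ (max n1 n3) := by omega
  have hRA : nM + (n1 - nD - nM) ≤ n1 - nD := by omega
  have hCmA : (max n1 n3) - n3 + (n3 - nM) ≤ (max n1 n3) := by omega
  have hGB : (max n1 n3) - nM + nM ≤ (max n1 n3) := by omega
  have hMidA : nD + (n3 - nM - nD) ≤ (max n1 n3) := by omega
  set D := fun ω => rowSeg 0 nD hD0 (X3 ω) with hD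
  set X1t := fun ω => rowSeg 0 nM hM0 (X1 ω) with hX1t
  set X2t := fun ω => rowSeg 0 nM hM0 (X2 ω) with hX2t
  set U := fun ω => X1t ω + X2t ω with hU
  set P := fun ω => rowSeg ((max n1 n3) - n1) (n1 - nD) hPA (Y1 ω) with hP
  set Q := fun ω => rowSeg ((max n1 n3) - nD) nD hQB (Y1 ω) with hQ
  set R := fun ω => rowSeg nM (n1 - nD - nM) hRA (P ω) with hR
  set Cm := fun ω => rowSeg ((max n1 n3) - n3) (n3 - nM) hCmA (Y2 ω) with hCm
  set G2 := fun ω => rowSeg ((max n1 n3) - nM) nM hGB (Y2 ω) with hG2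
  set M3 := fun ω => rowSeg nD (n3 - nM - nD) hMidA (X3 ω) with hM3
  -- independence facts
  have hDind : IndepRV p (fun ω => (X1 ω, X2 ω)) D := by
    rw [hD]
    exact indepRV_comp (fun ω => (X1 ω, X2 ω)) X3 hI123 id (rowSeg 0 nD hD0)
  have hUind : IndepRV p X3 U := by
    rw [hU, hX1t, hX2t]
    exact indepRV_comp X3 (fun ω => (X1 ω, X2 ω)) (indepRV_symm _ _ hI123) id
      (fun t => rowSeg 0 nM hM0 t.1 + rowSeg 0 nM hM0 t.2)
  have hX12tind : IndepRV p X1t X2t := by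
    rw [hX1t, hX2t]
    exact indepRV_comp X1 X2 hI12 (rowSeg 0 nM hM0) (rowSeg 0 nM hM0)
  -- Step A : I((X1,X2); Y1) = H(Y1) - H(D)
  have hHA : entropy2 p (fun ω => ((X1 ω, X2 ω), Y1 ω))
      = entropy2 p (fun ω => (X1 ω, X2 ω)) + entropy2 p D := by
    set ψ := fun t : (Matrix (Fin (max n1 n3)) (Fin N) (ZMod 2) × Matrix (Fin (max n1 n3)) (Fin N) (ZMod 2))
        × Matrix (Fin nD) (Fin N) (ZMod 2) =>
      (t.1, shiftS ((max n1 n3) - n1) t.1.1 + shiftS ((max n1 n3) - n2) t.1.2 + botEmbed nD hDq t.2) with hψ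
    have hptw : ∀ ω, ψ ((X1 ω, X2 ω), D ω) = ((X1 ω, X2 ω), Y1 ω) := by
      intro ω
      simp only [hψ, hD, hY1]
      rw [shiftS_eq_botEmbed nD hDq hD0 (X3 ω)]
    have hinj : Function.Injective ψ := by
      rintro ⟨⟨a1, a2⟩, d⟩ ⟨⟨b1, b2⟩, e⟩ h
      simp only [hψ, Prod.mk.injEq] at h
      obtain ⟨⟨hh1, hh2⟩, hh3⟩ := h
      subst hh1; subst hh2
      have h4 := add_left_cancel hh3
      have h5 := botEmbed_injective nD hDq h4
      subst h5
      rfl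
    calc entropy2 p (fun ω => ((X1 ω, X2 ω), Y1 ω))
        = entropy2 p (fun ω => ψ ((X1 ω, X2 ω), D ω)) :=
          (entropy_congr _ _ hptw).symm
      _ = entropy2 p (fun ω => ((X1 ω, X2 ω), D ω)) :=
          entropy_comp_inj (fun ω => ((X1 ω, X2 ω), D ω)) ψ hinj
      _ = _ := entropy_indep_pair hp hsum _ _ hDind
  have hI1eq : mutInfo2 p (fun ω => (X1 ω, X2 ω)) Y1 = entropy2 p Y1 - entropy2 p D := by
    simp only [mutInfo2]
    rw [hHA]
    ring
  -- Step B : I(X3; Y2) = H(Y2) - H(U)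
  have hHB : entropy2 p (fun ω => (X3 ω, Y2 ω))
      = entropy2 p X3 + entropy2 p U := by
    set ψ := fun t : Matrix (Fin (max n1 n3)) (Fin N) (ZMod 2) × Matrix (Fin nM) (Fin N) (ZMod 2) =>
      (t.1, botEmbed nM hMq t.2 + shiftS ((max n1 n3) - n3) t.1) with hψ
    have hptw : ∀ ω, ψ (X3 ω, U ω) = (X3 ω, Y2 ω) := by
      intro ω
      simp only [hψ, hU, hX1t, hX2t, hY2]
      rw [shiftS_eq_botEmbed nM hMq hM0 (X1 ω), shiftS_eq_botEmbed nM hMq hM0 (X2 ω),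
        ← botEmbed_add]
    have hinj : Function.Injective ψ := by
      rintro ⟨x, u⟩ ⟨y, v⟩ h
      simp only [hψ, Prod.mk.injEq] at h
      obtain ⟨hh1, hh2⟩ := h
      subst hh1
      have h4 := add_right_cancel hh2
      have h5 := botEmbed_injective nM hMq h4
      subst h5
      rfl
    calc entropy2 p (fun ω => (X3 ω, Y2 ω))
        = entropy2 p (fun ω => ψ (X3 ω, U ω)) := (entropy_congr _ _ hptw).symm
      _ = entropy2 p (fun ω => (X3 ω, U ω)) :=
          entropy_comp_inj (fun ω => (X3 ω, U ω)) ψ hinj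
      _ = _ := entropy_indep_pair hp hsum _ _ hUind
  have hI2eq : mutInfo2 p X3 Y2 = entropy2 p Y2 - entropy2 p U := by
    simp only [mutInfo2]
    rw [hHB]
    ring
  -- bounds
  have hDn1 : nD ≤ n1 := by omega
  have hY1b : entropy2 p Y1 ≤ entropy2 p (fun ω => (P ω, Q ω)) := by
    apply entropy_le_of_det hp Y1 (fun ω => (P ω, Q ω))
      (fun t => recPQ (max n1 n3) n1 nD hq1 hDn1 t)
    intro ω
    simp only [hP, hQ, hY1]
    exact recPQ_eq (max n1 n3) n1 n2 n3 nD hq1 hq3 h12 (by omega) (by omega)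
      (X1 ω) (X2 ω) (X3 ω) _ rfl hPA hQB
  have hPQle : entropy2 p (fun ω => (P ω, Q ω)) ≤ entropy2 p P + entropy2 p Q :=
    entropy_pair_le hp hsum P Q
  have hMn : nM ≤ n1 - nD := by omega
  have hPb : entropy2 p P ≤ entropy2 p (fun ω => (X1t ω, (X2t ω, R ω))) := by
    apply entropy_le_of_det hp P (fun ω => (X1t ω, (X2t ω, R ω)))
      (fun t => recP n1 n2 nD nM hMn (t.1, t.2.1, t.2.2))
    intro ω
    simp only [hX1t, hX2t, hR, hP, hY1]
    exact recP_eq (max n1 n3) n1 n2 n3 nD nM hq1 hq3 h12 h2 hMn (X1 ω) (X2 ω) (X3 ω) _ rfl hPA hM0 hM0 hRA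
  have hPble : entropy2 p (fun ω => (X1t ω, (X2t ω, R ω)))
      ≤ entropy2 p X1t + (entropy2 p X2t + entropy2 p R) := by
    refine le_trans (entropy_pair_le hp hsum X1t (fun ω => (X2t ω, R ω))) ?_
    have := entropy_pair_le hp hsum X2t R
    linarith
  have hRb : entropy2 p R ≤ ((n1 - nD - nM : ℕ) : ℝ) * N := entropy_matrix_le hp hsum _ N R
  have hQb : entropy2 p Q ≤ (nD : ℝ) * N := entropy_matrix_le hp hsum _ N Q
  have hDb : entropy2 p D ≤ (nD : ℝ) * N := entropy_matrix_le hp hsum _ N D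
  have hG2b : entropy2 p G2 ≤ (nM : ℝ) * N := entropy_matrix_le hp hsum _ N G2
  have hM3b : entropy2 p M3 ≤ ((n3 - nM - nD : ℕ) : ℝ) * N := entropy_matrix_le hp hsum _ N M3
  -- H(X1t) ≤ H(U), H(X2t) ≤ H(U)
  have hpairidp : entropy2 p (fun ω => (X1t ω, X2t ω)) = entropy2 p X1t + entropy2 p X2t :=
    entropy_indep_pair hp hsum _ _ hX12tind
  have hU1 : entropy2 p X1t ≤ entropy2 p U := by
    set ψ := fun t : Matrix (Fin nM) (Fin N) (ZMod 2) × Matrix (Fin nM) (Fin N) (ZMod 2) =>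
      (t.1 + t.2, t.2) with hψ
    have hinj : Function.Injective ψ := by
      rintro ⟨a, b⟩ ⟨a', b'⟩ h
      simp only [hψ, Prod.mk.injEq] at h
      obtain ⟨hh1, hh2⟩ := h
      subst hh2
      have := add_right_cancel hh1
      subst this
      rfl
    have e2 : entropy2 p (fun ω => ψ (X1t ω, X2t ω)) = entropy2 p (fun ω => (X1t ω, X2t ω)) :=
      entropy_comp_inj (fun ω => (X1t ω, X2t ω)) ψ hinj
    have e3 : entropy2 p (fun ω => ψ (X1t ω, X2t ω)) = entropy2 p (fun ω => (U ω, X2t ω)) := by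
      apply entropy_congr
      intro ω
      simp only [hψ, hU]
    have e4 : entropy2 p (fun ω => (U ω, X2t ω)) ≤ entropy2 p U + entropy2 p X2t :=
      entropy_pair_le hp hsum U X2t
    linarith
  have hU2 : entropy2 p X2t ≤ entropy2 p U := by
    set ψ := fun t : Matrix (Fin nM) (Fin N) (ZMod 2) × Matrix (Fin nM) (Fin N) (ZMod 2) =>
      (t.1 + t.2, t.1) with hψ
    have hinj : Function.Injective ψ := by
      rintro ⟨a, b⟩ ⟨a', b'⟩ h
      simp only [hψ, Prod.mk.injEq] at h
      obtain ⟨hh1, hh2⟩ := h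
      subst hh2
      have := add_left_cancel hh1
      subst this
      rfl
    have e2 : entropy2 p (fun ω => ψ (X1t ω, X2t ω)) = entropy2 p (fun ω => (X1t ω, X2t ω)) :=
      entropy_comp_inj (fun ω => (X1t ω, X2t ω)) ψ hinj
    have e3 : entropy2 p (fun ω => ψ (X1t ω, X2t ω)) = entropy2 p (fun ω => (U ω, X1t ω)) := by
      apply entropy_congr
      intro ω
      simp only [hψ, hU]
    have e4 : entropy2 p (fun ω => (U ω, X1t ω)) ≤ entropy2 p U + entropy2 p X1t :=
      entropy_pair_le hp hsum U X1t
    linarith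
  -- Y2 bounds
  have hM3' : nM ≤ n3 := by omega
  have hY2b : entropy2 p Y2 ≤ entropy2 p (fun ω => (Cm ω, G2 ω)) := by
    apply entropy_le_of_det hp Y2 (fun ω => (Cm ω, G2 ω)) (fun t => recTG (max n1 n3) n3 nM hM3' hq3 t)
    intro ω
    simp only [hCm, hG2, hY2]
    exact recTG_eq (max n1 n3) n3 nM hM3' hq3 (X1 ω) (X2 ω) (X3 ω) _ rfl hCmA hGB
  have hY2ble : entropy2 p (fun ω => (Cm ω, G2 ω)) ≤ entropy2 p Cm + entropy2 p G2 :=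
    entropy_pair_le hp hsum Cm G2
  have hCmb : entropy2 p Cm ≤ entropy2 p (fun ω => (D ω, M3 ω)) := by
    apply entropy_le_of_det hp Cm (fun ω => (D ω, M3 ω)) (fun t => recDM n3 nM nD t)
    intro ω
    simp only [hD, hM3, hCm, hY2]
    exact recDM_eq (max n1 n3) n3 nM nD h3 hq3 (X1 ω) (X2 ω) (X3 ω) _ rfl hCmA hD0 hMidA
  have hCmble : entropy2 p (fun ω => (D ω, M3 ω)) ≤ entropy2 p D + entropy2 p M3 :=
    entropy_pair_le hp hsum D M3
  -- final arithmetic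
  rw [hI1eq, hI2eq]
  have c1 : ((n1 - nD - nM : ℕ) : ℝ) = (n1 : ℝ) - (nD : ℝ) - (nM : ℝ) := by
    rw [Nat.cast_sub (by omega), Nat.cast_sub (by omega)]
  have c2 : ((n3 - nM - nD : ℕ) : ℝ) = (n3 : ℝ) - (nM : ℝ) - (nD : ℝ) := by
    rw [Nat.cast_sub (by omega), Nat.cast_sub (by omega)]
  nlinarith [hY1b, hPQle, hPb, hPble, hRb, hQb, hDb, hG2b, hM3b, hU1, hU2, hY2b, hY2ble,
    hCmb, hCmble, c1, c2]
end
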